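/- For nonnegative integers k, l and x, y, z with x + y + z = 1, (-1)^k * sum_{j=0}^{k} binomial(k,j) * x^{k-j} * E_{l+j+1}(y)/(l+j+1) + (-1)^l * sum_{j=0}^{l} binomial(l,j) * x^{l-j} * E_{k+j+1}(z)/(k+j+1) = (-x)^{k+l+1} / ((k+l+1) * binomial(k+l,k)). -/

import Mathlib

open Finset
open Polynomial

/-- The Euler polynomials `E n`, defined by the recurrence
`E n = X^n - (1/2) * ∑_{k<n} (n choose k) E k`, equivalent to the
generating function `2 e^{xt}/(e^t+1) = ∑ E_n(x) t^n/n!`. -/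
noncomputable def eulerPoly : ℕ → Polynomial ℚ
  | n => Polynomial.X ^ n - Polynomial.C (1/2 : ℚ) *
      ∑ k : Fin n, Polynomial.C ((n.choose k : ℚ)) * eulerPoly k

lemma euler_eval (n : ℕ) (x : ℚ) :
    (eulerPoly n).eval x = x ^ n - (1/2 : ℚ) *
      ∑ k ∈ range n, (n.choose k : ℚ) * (eulerPoly k).eval x := by
  conv_lhs => rw [eulerPoly]
  simp [eval_finset_sum]
  rw [← Fin.sum_univ_eq_sum_range (fun k => (n.choose k : ℚ) * (eulerPoly k).eval x) n]

lemma euler_sum_two (n : ℕ) (x : ℚ) :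
    (eulerPoly n).eval x + (eulerPoly n).eval (x + 1) = 2 * x ^ n := by
  induction n using Nat.strong_induction_on with
  | _ n ih =>
    rw [euler_eval n x, euler_eval n (x+1)]
    have h1 : ∑ k ∈ range n, (n.choose k : ℚ) * (eulerPoly k).eval x
        + ∑ k ∈ range n, (n.choose k : ℚ) * (eulerPoly k).eval (x+1)
        = ∑ k ∈ range n, (n.choose k : ℚ) * (2 * x ^ k) := by
      rw [← Finset.sum_add_distrib]
      refine Finset.sum_congr rfl fun k hk => ?_
      rw [← mul_add, ih k (mem_range.mp hk)]
    have h3 : (x + 1) ^ n = ∑ k ∈ range n, x ^ k * (n.choose k : ℚ) + x ^ n := by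
      rw [add_pow, Finset.sum_range_succ]; simp
    have h4 : ∑ k ∈ range n, (n.choose k : ℚ) * (2 * x ^ k)
        = 2 * ∑ k ∈ range n, x ^ k * (n.choose k : ℚ) := by
      rw [Finset.mul_sum]
      exact Finset.sum_congr rfl fun k _ => by ring
    linarith [h1, h3, h4]


lemma beta_sum (l : ℕ) : ∀ k : ℕ, ∑ j ∈ range (l+1), (-1:ℚ)^j * (l.choose j) / (k+j+1)
    = (k.factorial * l.factorial : ℚ) / (k+l+1).factorial := by
  induction l with
  | zero =>
    intro k
    simp [Nat.factorial_succ]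
    rw [eq_div_iff (by positivity)]
    push_cast
    field_simp
  | succ l ih =>
    intro k
    have hA : ∑ j ∈ range (l+2), (-1:ℚ)^j * (l.choose j) / (k+j+1)
        = ∑ j ∈ range (l+1), (-1:ℚ)^j * (l.choose j) / (k+j+1) := by
      rw [Finset.sum_range_succ, Nat.choose_succ_self]; simp
    have hstep : ∀ j ∈ range (l+1), (-1:ℚ)^(j+1) * ((l+1).choose (j+1)) / ((k:ℚ)+(j+1)+1)
        = (-1:ℚ)^(j+1) * (l.choose (j+1)) / ((k:ℚ)+(j+1)+1)
          - (-1:ℚ)^j * (l.choose j) / ((k:ℚ)+1+j+1) := by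
      intro j _
      rw [Nat.choose_succ_succ]
      push_cast
      have h1 : ((k:ℚ)+(j+1)+1) ≠ 0 := by positivity
      have h2 : ((k:ℚ)+1+j+1) ≠ 0 := by positivity
      field_simp
      ring
    have hB : ∑ j ∈ range (l+2), (-1:ℚ)^j * ((l+1).choose j) / (k+j+1)
        = ∑ j ∈ range (l+2), (-1:ℚ)^j * (l.choose j) / (k+j+1)
          - ∑ j ∈ range (l+1), (-1:ℚ)^j * (l.choose j) / ((k:ℚ)+1+j+1) := by
      rw [Finset.sum_range_succ' (fun j => (-1:ℚ)^j * ((l+1).choose j) / (k+j+1)) (l+1),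
          Finset.sum_range_succ' (fun j => (-1:ℚ)^j * (l.choose j) / (k+j+1)) (l+1)]
      push_cast
      rw [Finset.sum_congr rfl hstep, Finset.sum_sub_distrib]
      simp only [Nat.choose_zero_right, Nat.cast_one]
      ring
    have ih2 := ih (k+1)
    push_cast at ih2
    rw [hB, hA, ih k, ih2]
    have h2 : ((k + (l+1) + 1).factorial : ℚ) = (k+l+2) * (k+l+1).factorial := by
      have : k + (l+1) + 1 = (k + l + 1) + 1 := by omega
      rw [this, Nat.factorial_succ]
      push_cast; ring
    have h3 : ((k + 1 + l + 1).factorial : ℚ) = (k+l+2) * (k+l+1).factorial := by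
      have : k + 1 + l + 1 = (k + l + 1) + 1 := by omega
      rw [this, Nat.factorial_succ]
      push_cast; ring
    have h4 : (((l+1).factorial : ℚ)) = (l+1) * l.factorial := by
      rw [Nat.factorial_succ]; push_cast; ring
    have h5 : (((k+1).factorial : ℚ)) = (k+1) * k.factorial := by
      rw [Nat.factorial_succ]; push_cast; ring
    rw [h2, h3, h4, h5]
    have hne1 : ((k+l+1).factorial : ℚ) ≠ 0 := by positivity
    have hne2 : (k+l+2 : ℚ) ≠ 0 := by positivity
    field_simp
    ring


lemma eval_const_of_deriv_zero (Q : Polynomial ℚ) (h : derivative Q = 0) (a b : ℚ) :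
    Q.eval a = Q.eval b := by
  rw [Polynomial.eq_C_of_derivative_eq_zero h]; simp


lemma W_eq (k l : ℕ) (x y : ℚ) :
    (∑ j ∈ range (k+1), (-1:ℚ)^k * (k.choose j) * x^(k-j) / (l+j+1) * y^(l+j+1))
      + (∑ j ∈ range (l+1), (-1:ℚ)^l * (l.choose j) * x^(l-j) / (k+j+1) * (-x-y)^(k+j+1))
    = (-x)^(k+l+1) * ((k.factorial * l.factorial : ℚ) / (k+l+1).factorial) := by
  set P : Polynomial ℚ :=
      (∑ j ∈ range (k+1), C ((-1:ℚ)^k * (k.choose j) * x^(k-j) / (l+j+1)) * X^(l+j+1))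
      + (∑ j ∈ range (l+1), C ((-1:ℚ)^l * (l.choose j) * x^(l-j) / (k+j+1)) * (C (-x) - X)^(k+j+1))
    with hP
  have heval : ∀ t : ℚ, P.eval t =
      (∑ j ∈ range (k+1), (-1:ℚ)^k * (k.choose j) * x^(k-j) / (l+j+1) * t^(l+j+1))
      + (∑ j ∈ range (l+1), (-1:ℚ)^l * (l.choose j) * x^(l-j) / (k+j+1) * (-x-t)^(k+j+1)) := by
    intro t
    rw [hP]
    simp [eval_finset_sum]
  -- derivative of P is S1 - S2
  have hA : derivative P =
      (∑ j ∈ range (k+1), C ((-1:ℚ)^k * (k.choose j) * x^(k-j)) * X^(l+j))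
      - (∑ j ∈ range (l+1), C ((-1:ℚ)^l * (l.choose j) * x^(l-j)) * (C (-x) - X)^(k+j)) := by
    rw [hP, derivative_add, derivative_sum, derivative_sum]
    have t1 : ∀ j ∈ range (k+1),
        derivative (C ((-1:ℚ)^k * (k.choose j) * x^(k-j) / (l+j+1)) * X^(l+j+1))
        = C ((-1:ℚ)^k * (k.choose j) * x^(k-j)) * X^(l+j) := by
      intro j _
      rw [derivative_C_mul, derivative_X_pow]
      have h1 : l + j + 1 - 1 = l + j := by omega
      rw [h1, ← mul_assoc, ← C_mul]
      congr 2
      push_cast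
      exact div_mul_cancel₀ _ (by positivity)
    have t2 : ∀ j ∈ range (l+1),
        derivative (C ((-1:ℚ)^l * (l.choose j) * x^(l-j) / (k+j+1)) * (C (-x) - X)^(k+j+1))
        = -(C ((-1:ℚ)^l * (l.choose j) * x^(l-j)) * (C (-x) - X)^(k+j)) := by
      intro j _
      rw [derivative_C_mul, derivative_pow]
      have h1 : k + j + 1 - 1 = k + j := by omega
      have h2 : derivative (C (-x) - X) = -1 := by
        rw [derivative_sub, derivative_C, derivative_X]; ring
      rw [h1, h2]
      rw [show (C ((-1:ℚ)^l * (l.choose j) * x^(l-j) / (k+j+1)) *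
          (C ((k+j+1 : ℕ) : ℚ) * (C (-x) - X)^(k+j) * (-1)))
        = -((C ((-1:ℚ)^l * (l.choose j) * x^(l-j) / (k+j+1)) * C ((k+j+1 : ℕ) : ℚ)) *
            (C (-x) - X)^(k+j)) by ring]
      congr 2
      rw [← C_mul]
      congr 1
      push_cast
      exact div_mul_cancel₀ _ (by positivity)
    rw [Finset.sum_congr rfl t1, Finset.sum_congr rfl t2, Finset.sum_neg_distrib]
    ring
  -- S1 = S2 via funext
  have hS : (∑ j ∈ range (k+1), C ((-1:ℚ)^k * (k.choose j) * x^(k-j)) * X^(l+j))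
      = (∑ j ∈ range (l+1), C ((-1:ℚ)^l * (l.choose j) * x^(l-j)) * (C (-x) - X)^(k+j)) := by
    apply Polynomial.funext
    intro t
    simp [eval_finset_sum]
    have hL : ∑ j ∈ range (k+1), (-1:ℚ)^k * (k.choose j) * x^(k-j) * t^(l+j)
        = (-1:ℚ)^k * t^l * (t+x)^k := by
      rw [add_pow, Finset.mul_sum]
      refine Finset.sum_congr rfl fun j _ => ?_
      rw [pow_add]
      ring
    have hR : ∑ j ∈ range (l+1), (-1:ℚ)^l * (l.choose j) * x^(l-j) * (-x-t)^(k+j)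
        = (-1:ℚ)^l * (-x-t)^k * ((-x-t)+x)^l := by
      rw [add_pow, Finset.mul_sum]
      refine Finset.sum_congr rfl fun j _ => ?_
      rw [pow_add]
      ring
    rw [hL, hR]
    have e1 : ((-x-t)+x : ℚ) = -t := by ring
    have e2 : ((-x-t) : ℚ) = (-1) * (t+x) := by ring
    have e3 : (-t : ℚ) = (-1) * t := by ring
    rw [e1, e2, e3, mul_pow, mul_pow]
    have hsq : ((-1:ℚ))^l * (-1:ℚ)^l = 1 := by
      rw [← pow_add]
      exact Even.neg_one_pow ⟨l, rfl⟩
    linear_combination (-((-1:ℚ)^k * (t+x)^k * t^l)) * hsq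
  have hd0 : derivative P = 0 := by rw [hA, hS, sub_self]
  have hc := eval_const_of_deriv_zero P hd0 y 0
  rw [heval y, heval 0] at hc
  rw [hc]
  have h0 : ∑ j ∈ range (k+1), (-1:ℚ)^k * (k.choose j) * x^(k-j) / (l+j+1) * (0:ℚ)^(l+j+1)
      = 0 := by
    refine Finset.sum_eq_zero fun j _ => by simp
  rw [h0, zero_add]
  have h1 : ∑ j ∈ range (l+1), (-1:ℚ)^l * (l.choose j) * x^(l-j) / (k+j+1) * (-x-0)^(k+j+1)
      = (-x)^(k+l+1) * ∑ j ∈ range (l+1), (-1:ℚ)^j * (l.choose j) / (k+j+1) := by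
    rw [Finset.mul_sum]
    refine Finset.sum_congr rfl fun j hj => ?_
    have hjl : j ≤ l := Nat.lt_succ_iff.mp (mem_range.mp hj)
    obtain ⟨m, rfl⟩ : ∃ m, l = j + m := ⟨l - j, by omega⟩
    have e : j + m - j = m := by omega
    rw [e]
    have e2 : k + (j + m) + 1 = (k + j + 1) + m := by omega
    rw [e2, sub_zero]
    rw [pow_add, pow_add]
    push_cast
    ring
  rw [h1, beta_sum l k]

lemma eval_const_of_periodic2 (Q : Polynomial ℚ) (h : ∀ y : ℚ, Q.eval (y + 2) = Q.eval y)
    (a b : ℚ) : Q.eval a = Q.eval b := by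
  have key : Q - Polynomial.C (Q.eval 0) = 0 := by
    apply Polynomial.eq_zero_of_infinite_isRoot
    apply Set.Infinite.mono (s := Set.range (fun n : ℕ => (2 * n : ℚ)))
    · rintro _ ⟨n, rfl⟩
      have : Q.eval (2 * n : ℚ) = Q.eval 0 := by
        induction n with
        | zero => simp
        | succ m ihm =>
          push_cast
          have e : (2 : ℚ) * (m + 1) = (2 * m) + 2 := by ring
          rw [e, h]
          push_cast at ihm
          exact ihm
      simp [Polynomial.IsRoot, this]
    · apply Set.infinite_range_of_injective
      intro m n hmn
      simp only at hmn
      have : (m : ℚ) = n := by linarith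
      exact_mod_cast this
  have hQ : Q = Polynomial.C (Q.eval 0) := by linear_combination (norm := ring_nf) key
  rw [hQ]; simp

theorem sun_euler_poly_div (k l : ℕ) (x y z : ℚ) (h : x + y + z = 1) :
    (-1 : ℚ) ^ k * ∑ j ∈ range (k + 1),
        (k.choose j : ℚ) * x ^ (k - j) * (eulerPoly (l + j + 1)).eval y / (l + j + 1)
      + (-1 : ℚ) ^ l * ∑ j ∈ range (l + 1),
        (l.choose j : ℚ) * x ^ (l - j) * (eulerPoly (k + j + 1)).eval z / (k + j + 1)
    = (-x) ^ (k + l + 1) / ((k + l + 1) * ((k + l).choose k : ℚ)) := by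
  have hz : z = 1 - x - y := by linarith
  subst hz
  set R : ℚ := (-x) ^ (k+l+1) * ((k.factorial * l.factorial : ℚ) / (k+l+1).factorial) with hR
  set P2 : Polynomial ℚ :=
      (∑ j ∈ range (k+1), Polynomial.C ((-1:ℚ)^k * (k.choose j) * x^(k-j) / (l+j+1)) *
        eulerPoly (l+j+1))
      + (∑ j ∈ range (l+1), Polynomial.C ((-1:ℚ)^l * (l.choose j) * x^(l-j) / (k+j+1)) *
        ((eulerPoly (k+j+1)).comp (Polynomial.C (1-x) - Polynomial.X))) with hP2
  have heval2 : ∀ t : ℚ, P2.eval t =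
      (-1 : ℚ) ^ k * ∑ j ∈ range (k + 1),
        (k.choose j : ℚ) * x ^ (k - j) * (eulerPoly (l + j + 1)).eval t / (l + j + 1)
      + (-1 : ℚ) ^ l * ∑ j ∈ range (l + 1),
        (l.choose j : ℚ) * x ^ (l - j) * (eulerPoly (k + j + 1)).eval (1 - x - t) / (k + j + 1) := by
    intro t
    rw [hP2]
    simp only [Polynomial.eval_add, Polynomial.eval_finset_sum, Polynomial.eval_mul,
      Polynomial.eval_C, Polynomial.eval_comp, Polynomial.eval_sub, Polynomial.eval_X]
    rw [Finset.mul_sum, Finset.mul_sum]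
    congr 1
    · exact Finset.sum_congr rfl fun j _ => by ring
    · exact Finset.sum_congr rfl fun j _ => by ring
  have key : ∀ t : ℚ, P2.eval t + P2.eval (t+1) = 2 * R := by
    intro t
    rw [heval2 t, heval2 (t+1)]
    have hs1 : ∀ j ∈ range (k+1),
        (k.choose j : ℚ) * x ^ (k - j) * (eulerPoly (l + j + 1)).eval t / (l + j + 1)
        + (k.choose j : ℚ) * x ^ (k - j) * (eulerPoly (l + j + 1)).eval (t+1) / (l + j + 1)
        = (k.choose j : ℚ) * x ^ (k - j) * (2 * t^(l+j+1)) / (l + j + 1) := by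
      intro j _
      have hne : ((l:ℚ) + j + 1) ≠ 0 := by positivity
      have h2 := euler_sum_two (l+j+1) t
      push_cast at h2 ⊢
      field_simp
      linear_combination ((k.choose j : ℚ) * x ^ (k - j)) * h2
    have hs2 : ∀ j ∈ range (l+1),
        (l.choose j : ℚ) * x ^ (l - j) * (eulerPoly (k + j + 1)).eval (1 - x - t) / (k + j + 1)
        + (l.choose j : ℚ) * x ^ (l - j) * (eulerPoly (k + j + 1)).eval (1 - x - (t+1)) / (k + j + 1)
        = (l.choose j : ℚ) * x ^ (l - j) * (2 * (-x-t)^(k+j+1)) / (k + j + 1) := by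
      intro j _
      have hne : ((k:ℚ) + j + 1) ≠ 0 := by positivity
      have h2 := euler_sum_two (k+j+1) (-x-t)
      have e1 : (1 - x - t : ℚ) = (-x-t) + 1 := by ring
      have e2 : (1 - x - (t+1) : ℚ) = -x-t := by ring
      rw [e1, e2]
      push_cast at h2 ⊢
      field_simp
      linear_combination ((l.choose j : ℚ) * x ^ (l - j)) * h2
    have grp : (-1 : ℚ) ^ k * ∑ j ∈ range (k + 1),
          (k.choose j : ℚ) * x ^ (k - j) * (eulerPoly (l + j + 1)).eval t / (l + j + 1)
        + (-1 : ℚ) ^ l * ∑ j ∈ range (l + 1),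
          (l.choose j : ℚ) * x ^ (l - j) * (eulerPoly (k + j + 1)).eval (1 - x - t) / (k + j + 1)
        + ((-1 : ℚ) ^ k * ∑ j ∈ range (k + 1),
          (k.choose j : ℚ) * x ^ (k - j) * (eulerPoly (l + j + 1)).eval (t+1) / (l + j + 1)
        + (-1 : ℚ) ^ l * ∑ j ∈ range (l + 1),
          (l.choose j : ℚ) * x ^ (l - j) * (eulerPoly (k + j + 1)).eval (1 - x - (t+1)) / (k + j + 1))
        = (-1 : ℚ) ^ k * ∑ j ∈ range (k + 1),
          (k.choose j : ℚ) * x ^ (k - j) * (2 * t^(l+j+1)) / (l + j + 1)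
        + (-1 : ℚ) ^ l * ∑ j ∈ range (l + 1),
          (l.choose j : ℚ) * x ^ (l - j) * (2 * (-x-t)^(k+j+1)) / (k + j + 1) := by
      rw [← Finset.sum_congr rfl hs1, ← Finset.sum_congr rfl hs2,
        Finset.sum_add_distrib, Finset.sum_add_distrib]
      ring
    rw [grp]
    have hW := W_eq k l x t
    rw [hR]
    rw [Finset.mul_sum, Finset.mul_sum]
    have e3 : ∑ j ∈ range (k+1), (-1:ℚ)^k *
          ((k.choose j : ℚ) * x ^ (k - j) * (2 * t^(l+j+1)) / (l + j + 1))
        = 2 * ∑ j ∈ range (k+1), (-1:ℚ)^k * (k.choose j) * x^(k-j) / (l+j+1) * t^(l+j+1) := by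
      rw [Finset.mul_sum]
      exact Finset.sum_congr rfl fun j _ => by ring
    have e4 : ∑ j ∈ range (l+1), (-1:ℚ)^l *
          ((l.choose j : ℚ) * x ^ (l - j) * (2 * (-x-t)^(k+j+1)) / (k + j + 1))
        = 2 * ∑ j ∈ range (l+1), (-1:ℚ)^l * (l.choose j) * x^(l-j) / (k+j+1) * (-x-t)^(k+j+1) := by
      rw [Finset.mul_sum]
      exact Finset.sum_congr rfl fun j _ => by ring
    rw [e3, e4]
    linear_combination 2 * hW
  have per : ∀ t : ℚ, P2.eval (t + 2) = P2.eval t := by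
    intro t
    have a := key t
    have b := key (t+1)
    have e : (t + 1 + 1 : ℚ) = t + 2 := by ring
    rw [e] at b
    linarith
  have hconst := eval_const_of_periodic2 P2 per
  have hPy : P2.eval y = R := by
    have h2R := key y
    have := hconst (y+1) y
    linarith
  have hfin := heval2 y
  rw [hPy] at hfin
  rw [← hfin, hR]
  -- R = RHS
  have hch : ((k+l).choose k : ℚ) * (k.factorial : ℚ) * (l.factorial : ℚ) = ((k+l).factorial : ℚ) := by
    have := Nat.choose_mul_factorial_mul_factorial (Nat.le_add_right k l)
    have e : k + l - k = l := by omega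
    rw [e] at this
    exact_mod_cast congrArg (Nat.cast : ℕ → ℚ) this
  have hfac : ((k+l+1).factorial : ℚ) = (k+l+1) * (k+l).factorial := by
    rw [Nat.factorial_succ]; push_cast; ring
  have hne1 : ((k+l).factorial : ℚ) ≠ 0 := by positivity
  have hne2 : ((k:ℚ) + l + 1) ≠ 0 := by positivity
  have hne3 : ((k+l).choose k : ℚ) ≠ 0 := by
    have : 0 < (k+l).choose k := Nat.choose_pos (Nat.le_add_right k l)
    positivity
  have hne4 : (k.factorial : ℚ) ≠ 0 := by positivity
  have hne5 : (l.factorial : ℚ) ≠ 0 := by positivity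
  rw [hfac]
  field_simp
  linear_combination ((-x)^(k+l+1)) * hch
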